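/- Let three non-overlapping unit balls X, Y, Z in ℝ³ admit a line transversal meeting them in the order X, Y, Z. Then the angles ∠(y x z) and ∠(x z y) of the triangle of centers are acute (strictly less than π/2). -/

import Mathlib

open Real EuclideanGeometry

lemma key_ineq (a b pp q t : ℝ) (ha : 0 < a) (hb : 0 < b)
    (h1 : 4 ≤ a^2 + pp^2) (h2 : 4 ≤ b^2 + q^2) (ht : pp^2 + q^2 - 4 ≤ 2 * t) :
    0 < a * b + t := by
  nlinarith [mul_pos ha hb, sq_nonneg (pp*q), sq_nonneg (pp-q), sq_nonneg (pp+q),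
    mul_nonneg (by nlinarith : (0:ℝ) ≤ a^2 - (4 - pp^2)) (by nlinarith : (0:ℝ) ≤ b^2 - (4 - q^2)),
    sq_nonneg (a*b), sq_nonneg (a-b), sq_nonneg (a+b)]

lemma aux_inner_pos {E : Type*} [NormedAddCommGroup E] [InnerProductSpace ℝ E]
    (ex ey ez : E) (hey : ‖ey‖ ≤ 1) (hez : ‖ez‖ ≤ 1)
    (a b : ℝ) (ha : 0 < a) (hb : 0 < b)
    (h1 : 4 ≤ a^2 + ‖ey - ex‖^2) (h2 : 4 ≤ b^2 + ‖ez - ex‖^2) :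
    0 < a * b + inner ℝ (ey - ex) (ez - ex) := by
  have hd : (ey - ex) - (ez - ex) = ey - ez := by abel
  have hpq : ‖(ey - ex) - (ez - ex)‖ ≤ 2 := by
    rw [hd]
    calc ‖ey - ez‖ ≤ ‖ey‖ + ‖ez‖ := norm_sub_le _ _
      _ ≤ 2 := by linarith
  have hsq := norm_sub_sq_real (ey - ex) (ez - ex)
  have ht : ‖ey-ex‖^2 + ‖ez-ex‖^2 - 4 ≤ 2 * (inner ℝ (ey-ex) (ez-ex) : ℝ) := by
    nlinarith [norm_nonneg ((ey-ex)-(ez-ex))]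
  exact key_ineq a b ‖ey-ex‖ ‖ez-ex‖ _ ha hb h1 h2 ht

lemma first_angle_acute (x y z : EuclideanSpace ℝ (Fin 3))
    (hxy : 2 ≤ dist x y) (hxz : 2 ≤ dist x z)
    (p v : EuclideanSpace ℝ (Fin 3)) (hv : ‖v‖ = 1)
    (hX : ∃ t : ℝ, dist (p + t • v) x ≤ 1)
    (hY : ∃ t : ℝ, dist (p + t • v) y ≤ 1)
    (hZ : ∃ t : ℝ, dist (p + t • v) z ≤ 1)
    (hord1 : (inner ℝ x v : ℝ) < inner ℝ y v)
    (hord2 : (inner ℝ x v : ℝ) < inner ℝ z v) :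
    ∠ y x z < π / 2 := by
  have hvv : (inner ℝ v v : ℝ) = 1 := by
    rw [real_inner_self_eq_norm_sq, hv]; norm_num
  -- perpendicular components
  set sx : ℝ := inner ℝ (x - p) v with hsx
  set sy : ℝ := inner ℝ (y - p) v with hsy
  set sz : ℝ := inner ℝ (z - p) v with hsz
  set ex : EuclideanSpace ℝ (Fin 3) := x - p - sx • v with hex
  set ey : EuclideanSpace ℝ (Fin 3) := y - p - sy • v with hey
  set ez : EuclideanSpace ℝ (Fin 3) := z - p - sz • v with hez
  clear_value ex ey ez
  clear_value sx sy sz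
  have horth : ∀ (c : EuclideanSpace ℝ (Fin 3)) (s : ℝ),
      s = (inner ℝ (c - p) v : ℝ) → (inner ℝ (c - p - s • v) v : ℝ) = 0 := by
    intro c s hs
    rw [inner_sub_left, real_inner_smul_left, hvv, hs]; ring
  have hox : (inner ℝ ex v : ℝ) = 0 := by rw [hex]; exact horth x sx hsx
  have hoy : (inner ℝ ey v : ℝ) = 0 := by rw [hey]; exact horth y sy hsy
  have hoz : (inner ℝ ez v : ℝ) = 0 := by rw [hez]; exact horth z sz hsz
  have hnorm : ∀ (c : EuclideanSpace ℝ (Fin 3)) (s : ℝ) (e : EuclideanSpace ℝ (Fin 3)),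
      e = c - p - s • v → (inner ℝ e v : ℝ) = 0 → (∃ t : ℝ, dist (p + t • v) c ≤ 1) →
      ‖e‖ ≤ 1 := by
    rintro c s e he hoe ⟨t, htc⟩
    have hdec : c - (p + t • v) = e + (s - t) • v := by
      rw [he]; module
    have hnc : ‖c - (p + t • v)‖^2 = ‖e‖^2 + (s - t)^2 := by
      rw [hdec, norm_add_sq_real, real_inner_smul_right, hoe, norm_smul, hv]
      simp [mul_pow, sq_abs]
    have hd1 : ‖c - (p + t • v)‖ ≤ 1 := by rwa [← dist_eq_norm, dist_comm]
    nlinarith [norm_nonneg e, norm_nonneg (c - (p + t • v)), sq_nonneg (s - t)]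
  have hnex : ‖ex‖ ≤ 1 := hnorm x sx ex hex hox hX
  have hney : ‖ey‖ ≤ 1 := hnorm y sy ey hey hoy hY
  have hnez : ‖ez‖ ≤ 1 := hnorm z sz ez hez hoz hZ
  -- decomposition of differences
  have hdy : y - x = (sy - sx) • v + (ey - ex) := by rw [hey, hex]; module
  have hdz : z - x = (sz - sx) • v + (ez - ex) := by rw [hez, hex]; module
  have houx : (inner ℝ (ey - ex) v : ℝ) = 0 := by rw [inner_sub_left, hoy, hox]; ring
  have houz : (inner ℝ (ez - ex) v : ℝ) = 0 := by rw [inner_sub_left, hoz, hox]; ring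
  -- norms of differences
  have hny : ‖y - x‖^2 = (sy - sx)^2 + ‖ey - ex‖^2 := by
    rw [hdy, norm_add_sq_real, real_inner_smul_left, real_inner_comm, houx, norm_smul, hv]
    simp [mul_pow, sq_abs]
  have hnz : ‖z - x‖^2 = (sz - sx)^2 + ‖ez - ex‖^2 := by
    rw [hdz, norm_add_sq_real, real_inner_smul_left, real_inner_comm, houz, norm_smul, hv]
    simp [mul_pow, sq_abs]
  -- inner ℝ product of differences
  have hinner : (inner ℝ (y - x) (z - x) : ℝ)
      = (sy - sx) * (sz - sx) + inner ℝ (ey - ex) (ez - ex) := by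
    rw [hdy, hdz, inner_add_left, inner_add_right, inner_add_right,
      real_inner_smul_left, real_inner_smul_left, real_inner_smul_right,
      real_inner_smul_right, hvv]
    rw [real_inner_comm (ez - ex) v, houz, houx]
    ring
  -- ordering
  have hsub : ∀ c : EuclideanSpace ℝ (Fin 3), (inner ℝ (c - p) v : ℝ) = inner ℝ c v - inner ℝ p v := by
    intro c; rw [inner_sub_left]
  have ha : 0 < sy - sx := by rw [hsy, hsx, hsub, hsub]; linarith
  have hb : 0 < sz - sx := by rw [hsz, hsx, hsub, hsub]; linarith
  -- distance hypotheses
  have h2y : (2:ℝ) ≤ ‖y - x‖ := by rwa [dist_eq_norm, norm_sub_rev] at hxy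
  have h2z : (2:ℝ) ≤ ‖z - x‖ := by rwa [dist_eq_norm, norm_sub_rev] at hxz
  have h1 : 4 ≤ (sy - sx)^2 + ‖ey - ex‖^2 := by
    rw [← hny]
    have := pow_le_pow_left₀ (by norm_num : (0:ℝ) ≤ 2) h2y 2
    linarith
  have h2 : 4 ≤ (sz - sx)^2 + ‖ez - ex‖^2 := by
    rw [← hnz]
    have := pow_le_pow_left₀ (by norm_num : (0:ℝ) ≤ 2) h2z 2
    linarith
  have hpos : 0 < (inner ℝ (y - x) (z - x) : ℝ) := by
    rw [hinner]
    exact aux_inner_pos ex ey ez hney hnez _ _ ha hb h1 h2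
  -- conclude about the angle
  have hny0 : 0 < ‖y - x‖ := by linarith
  have hnz0 : 0 < ‖z - x‖ := by linarith
  rw [EuclideanGeometry.angle, InnerProductGeometry.angle, Real.arccos_lt_pi_div_two]
  have hvs : (y -ᵥ x : EuclideanSpace ℝ (Fin 3)) = y - x := rfl
  have hvs2 : (z -ᵥ x : EuclideanSpace ℝ (Fin 3)) = z - x := rfl
  rw [hvs, hvs2]
  exact div_pos hpos (mul_pos hny0 hnz0)

/-- if three non-overlapping unit balls in `ℝ³` admit a line transversal in
the order `X Y Z`, then the angles of the triangle of centers at `x` and at `z` are acute. -/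
theorem angles_acute_of_transversal (x y z : EuclideanSpace ℝ (Fin 3))
    (hxy : 2 ≤ dist x y) (hxz : 2 ≤ dist x z) (hyz : 2 ≤ dist y z)
    (p v : EuclideanSpace ℝ (Fin 3)) (hv : ‖v‖ = 1)
    (hX : ∃ t : ℝ, dist (p + t • v) x ≤ 1)
    (hY : ∃ t : ℝ, dist (p + t • v) y ≤ 1)
    (hZ : ∃ t : ℝ, dist (p + t • v) z ≤ 1)
    (hord1 : (inner ℝ x v : ℝ) < inner ℝ y v)
    (hord2 : (inner ℝ y v : ℝ) < inner ℝ z v) :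
    ∠ y x z < π / 2 ∧ ∠ x z y < π / 2 := by
  constructor
  · exact first_angle_acute x y z hxy hxz p v hv hX hY hZ hord1 (by linarith)
  · have hv' : ‖-v‖ = 1 := by rwa [norm_neg]
    have hneg : ∀ c : EuclideanSpace ℝ (Fin 3),
        (∃ t : ℝ, dist (p + t • v) c ≤ 1) → ∃ t : ℝ, dist (p + t • (-v)) c ≤ 1 := by
      rintro c ⟨t, ht⟩
      exact ⟨-t, by rwa [show p + (-t) • (-v) = p + t • v by module]⟩
    have ho1 : (inner ℝ z (-v) : ℝ) < inner ℝ y (-v) := by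
      rw [inner_neg_right, inner_neg_right]; linarith
    have ho2 : (inner ℝ z (-v) : ℝ) < inner ℝ x (-v) := by
      rw [inner_neg_right, inner_neg_right]; linarith
    rw [EuclideanGeometry.angle_comm]
    exact first_angle_acute z y x (by rwa [dist_comm]) (by rwa [dist_comm]) p (-v) hv'
      (hneg z hZ) (hneg y hY) (hneg x hX) ho1 ho2
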